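/- arXiv:2012.09274 — 6 statements merged into one kernel-verified Lean document; each statement's English description precedes it below -/
import Mathlib

section
/- If M is a MUS of an unsatisfiable knowledge base KB and C is an MCS of KB, then M ∩ C is nonempty. -/
/-- An interpretation assigns Boolean values to propositional variables. -/
abbrev Interp := ℕ → Bool
/-- A formula is identified with its semantics: the set of interpretations satisfying it. -/
abbrev Form := Interp → Prop

/-- An interpretation satisfies a set of formulas (interpreted conjunctively). -/
def Satisfies (i : Interp) (S : Set Form) : Prop := ∀ f ∈ S, f i
/-- A set of formulas is satisfiable. -/
def Sat (S : Set Form) : Prop := ∃ i, Satisfies i S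
/-- Classical entailment: every model of S is a model of φ. -/
def Entails (S : Set Form) (φ : Form) : Prop := ∀ i, Satisfies i S → φ i
/-- Negation of a formula. -/
def FNeg (φ : Form) : Form := fun i => ¬ φ i
/-- Minimal unsatisfiable subset of KB. -/
def IsMUS (KB M : Set Form) : Prop := M ⊆ KB ∧ ¬ Sat M ∧ ∀ M' ⊂ M, Sat M'
/-- Minimal correction set of KB. -/
def IsMCS (KB C : Set Form) : Prop := C ⊆ KB ∧ Sat (KB \ C) ∧ ∀ C' ⊂ C, ¬ Sat (KB \ C')
/-- H hits every member of Γ. -/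
def HittingSet (Γ : Set (Set Form)) (H : Set Form) : Prop := ∀ S ∈ Γ, (H ∩ S).Nonempty
/-- Minimal hitting set (under inclusion). -/
def MinHittingSet (Γ : Set (Set Form)) (H : Set Form) : Prop :=
  HittingSet Γ H ∧ ∀ H' ⊂ H, ¬ HittingSet Γ H'
/-- ε is a support for φ from KB: inclusion-minimal subset of KB entailing φ. -/
def IsSupport (KB : Set Form) (φ : Form) (ε : Set Form) : Prop :=
  ε ⊆ KB ∧ Entails ε φ ∧ ∀ ε' ⊂ ε, ¬ Entails ε' φ

/-- Every MUS intersects every MCS. -/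
theorem stmt3 (KB M C : Set Form) (hfin : KB.Finite) (hunsat : ¬ Sat KB)
    (hM : IsMUS KB M) (hC : IsMCS KB C) : (M ∩ C).Nonempty := by
  by_contra h
  rw [Set.not_nonempty_iff_eq_empty] at h
  obtain ⟨hMsub, hMunsat, _⟩ := hM
  obtain ⟨_, ⟨i, hi⟩, _⟩ := hC
  exact hMunsat ⟨i, fun f hf => hi f ⟨hMsub hf, fun hfc => (Set.eq_empty_iff_forall_notMem.mp h f) ⟨hf, hfc⟩⟩⟩
end

section
/- A subset M of an unsatisfiable finite knowledge base KB is a MUS if and only if M is a minimal hitting set of the collection of all MCSes of KB. -/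
lemma sat_subset {S T : Set Form} (h : S ⊆ T) (hT : Sat T) : Sat S := by
  obtain ⟨i, hi⟩ := hT
  exact ⟨i, fun f hf => hi f (h hf)⟩

lemma key (KB : Set Form) (hfin : KB.Finite) (X : Set Form) (hX : X ⊆ KB) :
    ¬ Sat X ↔ HittingSet {C | IsMCS KB C} X := by
  constructor
  · intro hu C hC
    rw [Set.nonempty_iff_ne_empty]
    intro he
    have hsub : X ⊆ KB \ C := fun f hf =>
      ⟨hX hf, fun hfc => Set.eq_empty_iff_forall_notMem.mp he f ⟨hf, hfc⟩⟩
    exact hu (sat_subset hsub hC.2.1)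
  · intro hhit
    by_contra hsat
    set 𝒮 : Set (Set Form) := {S | X ⊆ S ∧ S ⊆ KB ∧ Sat S} with h𝒮
    have hfinS : 𝒮.Finite :=
      Set.Finite.subset hfin.finite_subsets (fun S hS => hS.2.1)
    have hne : 𝒮.Nonempty := ⟨X, subset_rfl, hX, hsat⟩
    obtain ⟨S, hS, hmax⟩ := Set.Finite.exists_maximalFor id 𝒮 hfinS hne
    have hSKB : S ⊆ KB := hS.2.1
    have hdd : KB \ (KB \ S) = S := Set.diff_diff_cancel_left hSKB
    have hmcs : IsMCS KB (KB \ S) := by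
      refine ⟨Set.diff_subset, by rw [hdd]; exact hS.2.2, ?_⟩
      intro C' hC' hsatT
      have hTS : S ⊆ KB \ C' := by
        rw [← hdd]; exact Set.diff_subset_diff_right hC'.subset
      have hT𝒮 : KB \ C' ∈ 𝒮 := ⟨hS.1.trans hTS, Set.diff_subset, hsatT⟩
      have heq : S = KB \ C' := Set.Subset.antisymm hTS (hmax hT𝒮 hTS)
      obtain ⟨x, hxC, hxC'⟩ := Set.exists_of_ssubset hC'
      have hxKB : x ∈ KB := hxC.1
      have : x ∈ S := heq ▸ (⟨hxKB, hxC'⟩ : x ∈ KB \ C')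
      exact hxC.2 this
    obtain ⟨f, hfX, hfC⟩ := hhit _ hmcs
    exact hfC.2 (hS.1 hfX)

/-- M ⊆ KB is a MUS iff it is a minimal hitting set of the collection of all MCSes of KB. -/
theorem stmt4 (KB M : Set Form) (hfin : KB.Finite) (hunsat : ¬ Sat KB) (hsub : M ⊆ KB) :
    IsMUS KB M ↔ MinHittingSet {C | IsMCS KB C} M := by
  constructor
  · rintro ⟨-, hM, hmin⟩
    refine ⟨(key KB hfin M hsub).mp hM, fun M' hM' hh => ?_⟩
    exact (key KB hfin M' (hM'.subset.trans hsub)).mpr hh (hmin M' hM')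
  · rintro ⟨hh, hmin⟩
    refine ⟨hsub, (key KB hfin M hsub).mpr hh, fun M' hM' => ?_⟩
    by_contra hs
    exact hmin M' hM' ((key KB hfin M' (hM'.subset.trans hsub)).mp hs)
end

section
/- A subset C of an unsatisfiable finite knowledge base KB is an MCS if and only if C is a minimal hitting set of the collection of all MUSes of KB. -/
lemma exists_mus_aux : ∀ (n : ℕ) (S : Set Form) (hfin : S.Finite),
    hfin.toFinset.card ≤ n → ¬ Sat S →
    ∃ M, M ⊆ S ∧ ¬ Sat M ∧ ∀ M' ⊂ M, Sat M' := by
  intro n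
  induction n with
  | zero =>
    intro S hfin hcard hS
    refine ⟨S, Set.Subset.rfl, hS, fun M' hM' => ?_⟩
    have : S = ∅ := by
      have := Finset.card_eq_zero.mp (Nat.le_zero.mp hcard)
      have h2 : S = (hfin.toFinset : Set Form) := by simp
      rw [h2, this]; simp
    exact absurd (this ▸ hM') (by simp [Set.ssubset_def])
  | succ n ih =>
    intro S hfin hcard hS
    by_cases h : ∀ M' ⊂ S, Sat M'
    · exact ⟨S, Set.Subset.rfl, hS, h⟩
    · push_neg at h
      obtain ⟨M', hM'sub, hM'unsat⟩ := h
      have hM'fin : M'.Finite := hfin.subset hM'sub.subset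
      have hlt : hM'fin.toFinset.card < hfin.toFinset.card :=
        Finset.card_lt_card (Set.Finite.toFinset_ssubset_toFinset.mpr hM'sub)
      obtain ⟨M, hMsub, hMunsat, hMmin⟩ :=
        ih M' hM'fin (Nat.le_of_lt_succ (lt_of_lt_of_le hlt hcard)) hM'unsat
      exact ⟨M, hMsub.trans hM'sub.subset, hMunsat, hMmin⟩

lemma exists_mus (S : Set Form) (hfin : S.Finite) (hS : ¬ Sat S) :
    ∃ M, M ⊆ S ∧ ¬ Sat M ∧ ∀ M' ⊂ M, Sat M' :=
  exists_mus_aux hfin.toFinset.card S hfin le_rfl hS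

lemma hit_iff_sat (KB : Set Form) (hfin : KB.Finite) (D : Set Form) :
    HittingSet {M | IsMUS KB M} D ↔ Sat (KB \ D) := by
  constructor
  · intro hhit
    by_contra hns
    obtain ⟨M, hMsub, hMunsat, hMmin⟩ := exists_mus (KB \ D) hfin.diff hns
    have hMUS : IsMUS KB M := ⟨hMsub.trans Set.diff_subset, hMunsat, hMmin⟩
    obtain ⟨x, hxD, hxM⟩ := hhit M hMUS
    exact (hMsub hxM).2 hxD
  · rintro ⟨i, hi⟩ M hM
    rcases Set.eq_empty_or_nonempty (D ∩ M) with hemp | hne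
    · exfalso
      apply hM.2.1
      refine ⟨i, fun f hf => hi f ⟨hM.1 hf, fun hfD => ?_⟩⟩
      exact Set.eq_empty_iff_forall_notMem.mp hemp f ⟨hfD, hf⟩
    · exact hne

/-- C ⊆ KB is an MCS iff it is a minimal hitting set of the collection of all MUSes of KB. -/
theorem stmt5 (KB C : Set Form) (hfin : KB.Finite) (hunsat : ¬ Sat KB) (hsub : C ⊆ KB) :
    IsMCS KB C ↔ MinHittingSet {M | IsMUS KB M} C := by
  constructor
  · rintro ⟨_, hsat, hmin⟩
    exact ⟨(hit_iff_sat KB hfin C).mpr hsat,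
      fun C' hC' h => hmin C' hC' ((hit_iff_sat KB hfin C').mp h)⟩
  · rintro ⟨hhit, hmin⟩
    exact ⟨hsub, (hit_iff_sat KB hfin C).mp hhit,
      fun C' hC' h => hmin C' hC' ((hit_iff_sat KB hfin C').mpr h)⟩
end

section
/- If H is a hitting set of the collection of all MCSes of an unsatisfiable finite knowledge base KB, then H (viewed as a conjunction) is unsatisfiable. -/
/-- Any hitting set of the collection of all MCSes of an unsatisfiable KB is unsatisfiable. -/
theorem stmt6 (KB H : Set Form) (hfin : KB.Finite) (hunsat : ¬ Sat KB)
    (hsub : H ⊆ KB) (hhit : HittingSet {C | IsMCS KB C} H) : ¬ Sat H := by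
  rintro ⟨i, hi⟩
  -- D = formulas of KB falsified by i; it's a correction set
  set D : Set Form := {f | f ∈ KB ∧ ¬ f i} with hD
  have hDKB : D ⊆ KB := fun f hf => hf.1
  have hSatD : Sat (KB \ D) := ⟨i, fun f hf => by
    by_contra h; exact hf.2 ⟨hf.1, h⟩⟩
  -- candidates: subsets of D that are correction sets
  set T : Set (Set Form) := {C | C ⊆ D ∧ Sat (KB \ C)} with hT
  have hTfin : T.Finite := (hfin.finite_subsets.subset
    (fun C hC => hC.1.trans hDKB)).subset (fun C hC => hC)
  have hTne : D ∈ T := ⟨le_refl _, hSatD⟩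
  obtain ⟨C, hCT, hCmin⟩ := hTfin.exists_minimalFor id T ⟨D, hTne⟩
  have hMCS : IsMCS KB C := by
    refine ⟨hCT.1.trans hDKB, hCT.2, ?_⟩
    intro C' hC' hsat
    have : C' ∈ T := ⟨hC'.1.trans hCT.1, hsat⟩
    have heq : C = C' := le_antisymm (hCmin this hC'.1) hC'.1
    exact hC'.2 (le_of_eq heq)
  obtain ⟨f, hfH, hfC⟩ := hhit C hMCS
  exact (hCT.1 hfC).2 (hi f hfH)
end

section
/- Suppose seed ⊆ KB is such that seed ∪ {¬φ} is satisfiable, where KB ⊨ φ. Then there exists an MCS C of KB ∪ {¬φ} (with ¬φ hard, i.e., C ⊆ KB) such that seed ⊆ (KB ∪ {¬φ}) \ C, and in particular seed ∩ C = ∅. -/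
/-- A seed consistent with ¬φ can always be extended to the complement of an MCS of
KB ∪ {¬φ} with ¬φ hard. -/
theorem stmt16 (KB seed : Set Form) (φ : Form) (hfin : KB.Finite) (hent : Entails KB φ)
    (hsub : seed ⊆ KB) (hsat : Sat (seed ∪ {FNeg φ})) :
    ∃ C ⊆ KB, (Sat ((KB ∪ {FNeg φ}) \ C) ∧ ∀ C' ⊂ C, ¬ Sat ((KB ∪ {FNeg φ}) \ C')) ∧
      seed ⊆ (KB ∪ {FNeg φ}) \ C ∧ seed ∩ C = ∅ := by
  set F : Set (Set Form) := {C | C ⊆ KB \ seed ∧ Sat ((KB ∪ {FNeg φ}) \ C)} with hF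
  have hFfin : F.Finite := by
    apply Set.Finite.subset (hfin.diff (t := seed)).finite_subsets
    intro C hC; exact hC.1
  have hFne : (KB \ seed) ∈ F := by
    refine ⟨le_refl _, ?_⟩
    obtain ⟨i, hi⟩ := hsat
    refine ⟨i, fun f hf => hi f ?_⟩
    rcases hf with ⟨hf1, hf2⟩
    rcases hf1 with h | h
    · left; by_contra hns; exact hf2 ⟨h, hns⟩
    · right; exact h
  obtain ⟨C, hCF, hmin'⟩ := Set.Finite.exists_minimalFor id F hFfin ⟨_, hFne⟩
  have hmin : ∀ a' ∈ F, id a' ≤ id C → id C = id a' := fun a' h1 h2 => le_antisymm (hmin' h1 h2) h2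
  refine ⟨C, fun x hx => (hCF.1 hx).1, ⟨hCF.2, ?_⟩, ?_, ?_⟩
  · intro C' hC' hsat'
    have hC'F : C' ∈ F := ⟨hC'.1.trans hCF.1, hsat'⟩
    exact hC'.2 ((hmin C' hC'F hC'.1).le)
  · intro x hx
    exact ⟨Or.inl (hsub hx), fun hxC => (hCF.1 hxC).2 hx⟩
  · ext x; simp only [Set.mem_inter_iff, Set.mem_empty_iff_false, iff_false]
    rintro ⟨hxs, hxC⟩; exact (hCF.1 hxC).2 hxs
end

section
/- Let KB be a finite unsatisfiable set of propositional clauses and let h be a minimum-cardinality hitting set of the collection of ALL MCSes of KB. Then h is a smallest MUS of KB: h is unsatisfiable, every proper subset of h is satisfiable, and every MUS of KB has cardinality at least |h|. -/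
open Set in
/-- Any unsatisfiable subset of KB hits every MCS of KB. -/
lemma unsat_hits (KB S : Set Form) (hS : S ⊆ KB) (hus : ¬ Sat S) :
    HittingSet {C | IsMCS KB C} S := by
  intro C hC
  by_contra hemp
  rcases hC.2.1 with ⟨i, hi⟩
  exact hus ⟨i, fun f hf => hi f ⟨hS hf, fun hfC => hemp ⟨f, hf, hfC⟩⟩⟩

/-- If S ⊆ KB is satisfiable (KB finite), there is an MCS of KB disjoint from S. -/
lemma sat_misses (KB S : Set Form) (hfin : KB.Finite) (hS : S ⊆ KB) (hs : Sat S) :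
    ∃ C, IsMCS KB C ∧ C ∩ S = ∅ := by
  classical
  set T := {n : ℕ | ∃ C, C ⊆ KB \ S ∧ Sat (KB \ C) ∧ C.ncard = n} with hT
  have hne : (KB \ S).ncard ∈ T := by
    refine ⟨KB \ S, subset_rfl, ?_, rfl⟩
    have : KB \ (KB \ S) = S := by
      rw [Set.diff_diff_right, Set.diff_self, Set.empty_union,
        Set.inter_eq_self_of_subset_right hS]
    rw [this]; exact hs
  obtain ⟨n, hnT, hnmin⟩ := Nat.lt_wfRel.wf.has_min T ⟨_, hne⟩
  obtain ⟨C, hCsub, hCsat, hCn⟩ := hnT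
  refine ⟨C, ⟨fun x hx => (hCsub hx).1, hCsat, ?_⟩, ?_⟩
  · intro C' hC' hsat'
    have hC'T : C'.ncard ∈ T := ⟨C', hC'.1.trans hCsub, hsat', rfl⟩
    have hlt : C'.ncard < C.ncard :=
      Set.ncard_lt_ncard hC' (hfin.diff.subset hCsub)
    exact hnmin _ hC'T (hCn ▸ hlt)
  · rw [Set.eq_empty_iff_forall_notMem]
    rintro x ⟨hxC, hxS⟩
    exact (hCsub hxC).2 hxS

/-- A minimum-cardinality hitting set of the collection of all MCSes of an unsatisfiable
finite KB is a smallest MUS of KB. -/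
theorem stmt19 (KB h : Set Form) (hfin : KB.Finite) (hunsat : ¬ Sat KB)
    (hsub : h ⊆ KB) (hhit : HittingSet {C | IsMCS KB C} h)
    (hmin : ∀ h' ⊆ KB, HittingSet {C | IsMCS KB C} h' → h.ncard ≤ h'.ncard) :
    ¬ Sat h ∧ (∀ h' ⊂ h, Sat h') ∧ ∀ M, IsMUS KB M → h.ncard ≤ M.ncard := by
  have key1 : ¬ Sat h := by
    intro hsat
    obtain ⟨C, hC, hdisj⟩ := sat_misses KB h hfin hsub hsat
    obtain ⟨x, hx⟩ := hhit C hC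
    exact absurd hdisj (Set.nonempty_iff_ne_empty.mp ⟨x, hx.2, hx.1⟩)
  refine ⟨key1, ?_, ?_⟩
  · intro h' hh'
    by_contra hus
    have hh'sub : h' ⊆ KB := hh'.1.trans hsub
    have := hmin h' hh'sub (unsat_hits KB h' hh'sub hus)
    have hlt : h'.ncard < h.ncard := Set.ncard_lt_ncard hh' (hfin.subset hsub)
    omega
  · intro M hM
    exact hmin M hM.1 (unsat_hits KB M hM.1 hM.2.1)
end
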